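/- Let Z be an infinite-dimensional Banach space, V = B(0, r) the open ball of radius r around 0, and W = B(0, r/2). Then for every finite set {z_1, …, z_k} ⊆ Z there exists ζ ∈ V \ W such that ‖ζ + z_i − z_j‖ ≥ ‖z_i − z_j‖ for all i, j ≤ k. -/

import Mathlib

/-- Let `Z` be an infinite-dimensional Banach space, `V = B(0,r)` and
`W = B(0,r/2)`.  For every finite `{z₁,…,z_k} ⊆ Z` there is `ζ ∈ V \ W` with
`‖ζ + zᵢ − z_j‖ ≥ ‖zᵢ − z_j‖` for all `i, j ≤ k`. -/
theorem stmt19 {Z : Type*} [NormedAddCommGroup Z] [NormedSpace ℝ Z] [CompleteSpace Z]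
    (hdim : ¬ FiniteDimensional ℝ Z) (r : ℝ) (hr : 0 < r) {k : ℕ} (z : Fin k → Z) :
    ∃ ζ : Z, ζ ∈ Metric.ball (0 : Z) r \ Metric.ball (0 : Z) (r / 2) ∧
      ∀ i j, ‖z i - z j‖ ≤ ‖ζ + z i - z j‖ := by
  -- norming functionals
  have hg : ∀ p : Fin k × Fin k, ∃ g : Z →L[ℝ] ℝ, ‖g‖ ≤ 1 ∧
      g (z p.1 - z p.2) = ‖z p.1 - z p.2‖ := by
    intro p
    by_cases h : z p.1 - z p.2 = 0
    · exact ⟨0, by simp [h]⟩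
    · obtain ⟨g, hg1, hg2⟩ := exists_dual_vector ℝ _ (norm_ne_zero_iff.mpr h)
      exact ⟨g, le_of_eq hg1, by simpa using hg2⟩
  choose g hg1 hg2 using hg
  -- find nonzero x in the intersection of kernels
  have hx : ∃ x : Z, x ≠ 0 ∧ ∀ p : Fin k × Fin k, g p x = 0 := by
    by_contra h
    push_neg at h
    apply hdim
    have hinj : Function.Injective
        (LinearMap.pi (fun p : Fin k × Fin k => (g p : Z →ₗ[ℝ] ℝ))) := by
      rw [← LinearMap.ker_eq_bot, LinearMap.ker_eq_bot']
      intro x hx0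
      by_contra hx
      apply (h x hx).elim
      intro p
      have := congrFun hx0 p
      simpa using this
    exact FiniteDimensional.of_injective _ hinj
  obtain ⟨x, hx0, hxk⟩ := hx
  have hxn : (0:ℝ) < ‖x‖ := norm_pos_iff.mpr hx0
  set c : ℝ := (3 * r / 4) / ‖x‖ with hc
  refine ⟨c • x, ?_, ?_⟩
  · have hnorm : ‖c • x‖ = 3 * r / 4 := by
      rw [norm_smul, Real.norm_eq_abs, hc, abs_div, abs_of_nonneg (by positivity),
        abs_of_nonneg hxn.le, div_mul_cancel₀]
      exact hxn.ne'
    constructor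
    · simp only [Metric.mem_ball, dist_zero_right, hnorm]
      linarith
    · simp only [Metric.mem_ball, dist_zero_right, hnorm, not_lt]
      linarith
  · intro i j
    have hgz : g (i, j) (c • x) = 0 := by
      rw [map_smul, hxk (i, j), smul_zero]
    calc ‖z i - z j‖ = g (i, j) (c • x + z i - z j) := by
          rw [add_sub_assoc, map_add, hgz, zero_add, hg2 (i, j)]
      _ ≤ ‖g (i, j) (c • x + z i - z j)‖ := le_abs_self _
      _ ≤ ‖g (i, j)‖ * ‖c • x + z i - z j‖ := (g (i, j)).le_opNorm _
      _ ≤ 1 * ‖c • x + z i - z j‖ := by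
          apply mul_le_mul_of_nonneg_right (hg1 (i, j)) (norm_nonneg _)
      _ = _ := one_mul _
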